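/- arXiv:2508.02891 — 2 statements merged into one kernel-verified Lean document; each statement's English description precedes it below -/
import Mathlib

section
/- For all vectors z_1,…,z_8, w ∈ ℂ^4 the following polynomial identity holds: 2A·⟨127w⟩ − B·⟨128w⟩ = ⟨1278⟩·⟨12w*43*568⟩ + det[(128*34), z_6, z_5, (78*12w)], where ⟨127w⟩ := det[z_1 z_2 z_7 w], ⟨128w⟩ := det[z_1 z_2 z_8 w], ⟨12w*43*568⟩ is the chain polynomial with blocks (z_1,z_2,w), (z_4,z_3), (z_5,z_6,z_8), and (128*34) and (78*12w) are the shuffle vectors associated with the tuples ((z_1,z_2,z_8),(z_3,z_4)) and ((z_7,z_8),(z_1,z_2,w)) respectively. -/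
noncomputable section

/-- `⟨u₁ u₂ u₃ u₄⟩ = det[u₁ u₂ u₃ u₄]`: the determinant of the `4 × 4` complex matrix with
columns `u₁, u₂, u₃, u₄` in the listed order. -/
def det4 (a b c d : Fin 4 → ℂ) : ℂ :=
  Matrix.det (Matrix.of fun i j => ![a, b, c, d] j i)

/-- The chain polynomial `⟨X * Y * U⟩` for blocks `X = (x₁,x₂,x₃)`, `Y = (y₁,y₂)`,
`U = (u₁,u₂,u₃)` of sizes `(3,2,3)`:
`Σ_{w ∈ S₂¹} sign(w)·det[x₁ x₂ x₃ y_{w(2)}]·det[y_{w(1)} u₁ u₂ u₃]`. -/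
def chain323 (x1 x2 x3 y1 y2 u1 u2 u3 : Fin 4 → ℂ) : ℂ :=
  det4 x1 x2 x3 y2 * det4 y1 u1 u2 u3 - det4 x1 x2 x3 y1 * det4 y2 u1 u2 u3

/-- The shuffle vector `(X * Y) ∈ ℂ⁴` for tuples `X = (x₁,x₂,x₃)`, `Y = (y₁,y₂)`
(`p + q = 5`): `Σ_j (−1)^{j−1}·det[x₁ x₂ x₃ y₁ ⋯ ŷ_j ⋯ y₂]·y_j`. -/
def shuf32 (x1 x2 x3 y1 y2 : Fin 4 → ℂ) : Fin 4 → ℂ :=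
  det4 x1 x2 x3 y2 • y1 - det4 x1 x2 x3 y1 • y2

/-- The shuffle vector `(X * Y) ∈ ℂ⁴` for tuples `X = (x₁,x₂)`, `Y = (y₁,y₂,y₃)`
(`p + q = 5`): `Σ_j (−1)^{j−1}·det[x₁ x₂ y₁ ⋯ ŷ_j ⋯ y₃]·y_j`. -/
def shuf23 (x1 x2 y1 y2 y3 : Fin 4 → ℂ) : Fin 4 → ℂ :=
  det4 x1 x2 y2 y3 • y1 - det4 x1 x2 y1 y3 • y2 + det4 x1 x2 y1 y2 • y3

/-- `A := Y₈₈` where `Y_{ij} := ⟨12i * 43 * 56j⟩`. -/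
def Aco (z1 z2 z3 z4 z5 z6 z7 z8 : Fin 4 → ℂ) : ℂ :=
  chain323 z1 z2 z8 z4 z3 z5 z6 z8

/-- `B := Y₇₈ + Y₈₇` where `Y_{ij} := ⟨12i * 43 * 56j⟩`. -/
def Bco (z1 z2 z3 z4 z5 z6 z7 z8 : Fin 4 → ℂ) : ℂ :=
  chain323 z1 z2 z7 z4 z3 z5 z6 z8 + chain323 z1 z2 z8 z4 z3 z5 z6 z7

/-- `C := Y₇₇` where `Y_{ij} := ⟨12i * 43 * 56j⟩`. -/
def Cco (z1 z2 z3 z4 z5 z6 z7 z8 : Fin 4 → ℂ) : ℂ :=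
  chain323 z1 z2 z7 z4 z3 z5 z6 z7

lemma det4_eq (a b c d : Fin 4 → ℂ) : det4 a b c d =
    a 0*(b 1*(c 2*d 3 - c 3*d 2) - b 2*(c 1*d 3 - c 3*d 1) + b 3*(c 1*d 2 - c 2*d 1))
  - a 1*(b 0*(c 2*d 3 - c 3*d 2) - b 2*(c 0*d 3 - c 3*d 0) + b 3*(c 0*d 2 - c 2*d 0))
  + a 2*(b 0*(c 1*d 3 - c 3*d 1) - b 1*(c 0*d 3 - c 3*d 0) + b 3*(c 0*d 1 - c 1*d 0))
  - a 3*(b 0*(c 1*d 2 - c 2*d 1) - b 1*(c 0*d 2 - c 2*d 0) + b 2*(c 0*d 1 - c 1*d 0)) := by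
  simp [det4, Matrix.det_succ_row_zero, Fin.sum_univ_succ, Matrix.det_fin_three]
  norm_num [Fin.succAbove, Fin.lt_def, show (2:Fin 3).succ = 3 from rfl,
    show Fin.castSucc (2:Fin 3) = 2 from rfl]
  norm_num [Matrix.vecCons, Fin.cons, Fin.cases, Fin.induction, Fin.induction.go]
  ring

/-- Multilinear expansion of `det4` with linear-combination first and last columns. -/
lemma det4_lin (c3 c4 d1 d2 dw : ℂ) (u v p q a b x : Fin 4 → ℂ) :
    det4 (c3 • u - c4 • v) p q (d1 • a - d2 • b + dw • x)
      = c3*d1*det4 u p q a - c3*d2*det4 u p q b + c3*dw*det4 u p q x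
      - c4*d1*det4 v p q a + c4*d2*det4 v p q b - c4*dw*det4 v p q x := by
  simp only [det4_eq, Pi.sub_apply, Pi.add_apply, Pi.smul_apply, smul_eq_mul]
  ring

/-- 5-term Grassmann–Plücker (Cramer) relation. -/
lemma cramer5 (z1 z2 z7 z8 w a p q : Fin 4 → ℂ) :
    det4 z7 z8 z2 w * det4 a p q z1 - det4 z7 z8 z1 w * det4 a p q z2
      + det4 z7 z8 z1 z2 * det4 a p q w
      = det4 z1 z2 z8 w * det4 a q p z7 - det4 z1 z2 z7 w * det4 a q p z8 := by
  simp only [det4_eq]; ring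

/-- 3-term Grassmann–Plücker relation with common pair. -/
lemma gp3 (z1 z2 z7 z8 w a : Fin 4 → ℂ) :
    det4 z1 z2 z7 z8 * det4 z1 z2 w a
      = det4 z1 z2 z7 w * det4 z1 z2 z8 a - det4 z1 z2 z7 a * det4 z1 z2 z8 w := by
  simp only [det4_eq]; ring

/-- For all vectors `z₁, …, z₈, w ∈ ℂ⁴`:
`2A·⟨127w⟩ − B·⟨128w⟩ = ⟨1278⟩·⟨12w * 43 * 568⟩ + det[(128*34), z₆, z₅, (78*12w)]`. -/
theorem identity_2A127w_minus_B128w (z1 z2 z3 z4 z5 z6 z7 z8 w : Fin 4 → ℂ) :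
    2 * Aco z1 z2 z3 z4 z5 z6 z7 z8 * det4 z1 z2 z7 w
      - Bco z1 z2 z3 z4 z5 z6 z7 z8 * det4 z1 z2 z8 w
    = det4 z1 z2 z7 z8 * chain323 z1 z2 w z4 z3 z5 z6 z8
      + det4 (shuf32 z1 z2 z8 z3 z4) z6 z5 (shuf23 z7 z8 z1 z2 w) := by
  have hE3 := cramer5 z1 z2 z7 z8 w z3 z6 z5
  have hE4 := cramer5 z1 z2 z7 z8 w z4 z6 z5
  have hG3 := gp3 z1 z2 z7 z8 w z3
  have hG4 := gp3 z1 z2 z7 z8 w z4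
  simp only [Aco, Bco, chain323, shuf32, shuf23, det4_lin]
  linear_combination
    (- det4 z4 z5 z6 z8) * hG3 + det4 z3 z5 z6 z8 * hG4
    - det4 z1 z2 z8 z4 * hE3 + det4 z1 z2 z8 z3 * hE4

end
end

section
/- For all vectors z_1,…,z_8 ∈ ℂ^4 the following polynomial identity holds: A·⟨1567⟩² − B·⟨1567⟩·⟨1568⟩ + C·⟨1568⟩² = −⟨5678⟩·det[(156*34), z_2, z_1, (78*156)], where (156*34) and (78*156) are the shuffle vectors associated with the tuples ((z_1,z_5,z_6),(z_3,z_4)) and ((z_7,z_8),(z_1,z_5,z_6)) respectively. -/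
set_option maxHeartbeats 4000000

noncomputable section

lemma det4_expand (a b c d : Fin 4 → ℂ) : det4 a b c d =
  a 0 * (b 1 * (c 2 * d 3 - c 3 * d 2) - b 2 * (c 1 * d 3 - c 3 * d 1) + b 3 * (c 1 * d 2 - c 2 * d 1))
  - a 1 * (b 0 * (c 2 * d 3 - c 3 * d 2) - b 2 * (c 0 * d 3 - c 3 * d 0) + b 3 * (c 0 * d 2 - c 2 * d 0))
  + a 2 * (b 0 * (c 1 * d 3 - c 3 * d 1) - b 1 * (c 0 * d 3 - c 3 * d 0) + b 3 * (c 0 * d 1 - c 1 * d 0))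
  - a 3 * (b 0 * (c 1 * d 2 - c 2 * d 1) - b 1 * (c 0 * d 2 - c 2 * d 0) + b 2 * (c 0 * d 1 - c 1 * d 0)) := by
  simp [det4, Matrix.det_succ_row_zero, Fin.sum_univ_succ, Fin.succAbove]
  ring

/-- Three-term Plücker relation with common pair `(c, d)`. -/
lemma lemR (a b c d e f : Fin 4 → ℂ) :
    det4 a c d e * det4 b c d f - det4 a c d f * det4 b c d e = det4 a c d b * det4 c d e f := by
  simp only [det4_expand]; ring

/-- A four-term Grassmann–Plücker relation with one common point `z1`. -/
lemma lemQ (z1 z2 x z5 z6 z7 z8 : Fin 4 → ℂ) :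
    det4 z1 z2 z8 x * det4 z1 z5 z6 z7 - det4 z1 z2 z7 x * det4 z1 z5 z6 z8
      - det4 x z2 z1 z5 * det4 z7 z8 z1 z6 + det4 x z2 z1 z6 * det4 z7 z8 z1 z5 = 0 := by
  simp only [det4_expand]; ring

lemma det4_comb_left (p q : ℂ) (v w b c d : Fin 4 → ℂ) :
    det4 (p • v - q • w) b c d = p * det4 v b c d - q * det4 w b c d := by
  simp only [det4_expand, Pi.sub_apply, Pi.smul_apply, smul_eq_mul]; ring

lemma det4_comb_right (p q r : ℂ) (a b c u v w : Fin 4 → ℂ) :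
    det4 a b c (p • u - q • v + r • w)
      = p * det4 a b c u - q * det4 a b c v + r * det4 a b c w := by
  simp only [det4_expand, Pi.sub_apply, Pi.add_apply, Pi.smul_apply, smul_eq_mul]; ring

lemma det4_dup34 (a b c : Fin 4 → ℂ) : det4 a b c c = 0 := by
  simp only [det4_expand]; ring

/-- For all vectors `z₁, …, z₈ ∈ ℂ⁴`:
`A·⟨1567⟩² − B·⟨1567⟩·⟨1568⟩ + C·⟨1568⟩² = −⟨5678⟩·det[(156*34), z₂, z₁, (78*156)]`. -/
theorem identity_quadratic_in_1567_1568 (z1 z2 z3 z4 z5 z6 z7 z8 : Fin 4 → ℂ) :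
    Aco z1 z2 z3 z4 z5 z6 z7 z8 * det4 z1 z5 z6 z7 ^ 2
      - Bco z1 z2 z3 z4 z5 z6 z7 z8 * det4 z1 z5 z6 z7 * det4 z1 z5 z6 z8
      + Cco z1 z2 z3 z4 z5 z6 z7 z8 * det4 z1 z5 z6 z8 ^ 2
    = -(det4 z5 z6 z7 z8 * det4 (shuf32 z1 z5 z6 z3 z4) z2 z1 (shuf23 z7 z8 z1 z5 z6)) := by
  have hR3 := lemR z1 z4 z5 z6 z7 z8
  have hR4 := lemR z1 z3 z5 z6 z7 z8
  have hQ3 := lemQ z1 z2 z3 z5 z6 z7 z8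
  have hQ4 := lemQ z1 z2 z4 z5 z6 z7 z8
  have hd3 := det4_dup34 z3 z2 z1
  have hd4 := det4_dup34 z4 z2 z1
  simp only [Aco, Bco, Cco, chain323, shuf32, shuf23, det4_comb_left, det4_comb_right]
  linear_combination
      (det4 z1 z2 z8 z3 * det4 z1 z5 z6 z7 - det4 z1 z2 z7 z3 * det4 z1 z5 z6 z8) * hR3
    - (det4 z1 z2 z8 z4 * det4 z1 z5 z6 z7 - det4 z1 z2 z7 z4 * det4 z1 z5 z6 z8) * hR4
    + det4 z5 z6 z7 z8 * det4 z1 z5 z6 z4 * hQ3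
    - det4 z5 z6 z7 z8 * det4 z1 z5 z6 z3 * hQ4
    + det4 z5 z6 z7 z8 * det4 z1 z5 z6 z4 * det4 z7 z8 z5 z6 * hd3
    - det4 z5 z6 z7 z8 * det4 z1 z5 z6 z3 * det4 z7 z8 z5 z6 * hd4

end
end
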